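/- Let g be a function on prime powers with |g(p^k)| ≤ 2, g(p^k) ∈ {−2,0,2} for k ≥ 1, and g(p^k) g(p^{k+1}) ≤ 0 for all k ≥ 0. Then for any prime p ≥ 3 and k ≥ 1 with g(p^k) ≠ 0, the Euler factor E_p(p^k) = g(p^k)² + 2 ∑_{i ≥ k+1} g(p^k)g(p^i)/p^{i−k} satisfies E_p(p^k) ≥ 4 − 8p/(p² − 1) ≥ 1. -/

import Mathlib

/-- Pair bound: with `c = ±2`, `a, b ∈ {-2,0,2}`, `a*b ≤ 0`, `X > 0`, `r ≥ 1`. -/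
lemma pair_bound (c a b X r : ℝ) (hc : c = -2 ∨ c = 2)
    (ha : a = -2 ∨ a = 0 ∨ a = 2) (hb : b = -2 ∨ b = 0 ∨ b = 2)
    (hab : a * b ≤ 0) (hX : 0 < X) (hr : 1 ≤ r) :
    -4 / X ≤ c * a / X + c * b / (X * r) := by
  have hr0 : 0 < r := lt_of_lt_of_le one_pos hr
  have hXr : 0 < X * r := mul_pos hX hr0
  have key : -4 * r ≤ c * a * r + c * b := by
    rcases hc with rfl | rfl <;> rcases ha with rfl | rfl | rfl <;>
      rcases hb with rfl | rfl | rfl <;> nlinarith [hab]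
  have h1 : -4 / X = (-4 * r) / (X * r) := by
    field_simp
  have h2 : c * a / X + c * b / (X * r) = (c * a * r + c * b) / (X * r) := by
    field_simp
  rw [h1, h2]
  exact (div_le_div_iff_of_pos_right hXr).mpr key

/- Lower bound for the Euler factor `E_p(p^k)` when `g(p^k) ≠ 0`, `p ≥ 3`, `k ≥ 1`. -/
theorem euler_factor_lower_bound
    (g : ℕ → ℝ) (p : ℕ) (hp : p.Prime) (hp3 : 3 ≤ p)
    (hb : ∀ k : ℕ, |g (p ^ k)| ≤ 2)
    (hval : ∀ k : ℕ, 1 ≤ k → g (p ^ k) = -2 ∨ g (p ^ k) = 0 ∨ g (p ^ k) = 2)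
    (halt : ∀ k : ℕ, g (p ^ k) * g (p ^ (k + 1)) ≤ 0)
    (k : ℕ) (hk : 1 ≤ k) (hne : g (p ^ k) ≠ 0) :
    4 - 8 * (p : ℝ) / ((p : ℝ) ^ 2 - 1) ≤
      g (p ^ k) ^ 2 +
        2 * ∑' i : ℕ, g (p ^ k) * g (p ^ (k + i + 1)) / (p : ℝ) ^ (i + 1) ∧
    (1 : ℝ) ≤ 4 - 8 * (p : ℝ) / ((p : ℝ) ^ 2 - 1) := by
  set r : ℝ := (p : ℝ) with hr_def
  have hr3 : (3 : ℝ) ≤ r := by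
    show (3 : ℝ) ≤ (p : ℝ); exact_mod_cast hp3
  have hr1 : (1 : ℝ) < r := by linarith
  have hr0 : (0 : ℝ) < r := by linarith
  have hrne : r ≠ 0 := ne_of_gt hr0
  have hr2pos : (0 : ℝ) < r ^ 2 - 1 := by nlinarith
  have hr2ne : r ^ 2 - 1 ≠ 0 := ne_of_gt hr2pos
  have hrinvlt : r⁻¹ < 1 := by rw [inv_lt_one_iff₀]; right; exact hr1
  have hxlt : (r ^ 2)⁻¹ < 1 := by rw [inv_lt_one_iff₀]; right; nlinarith
  have hxnn : (0 : ℝ) ≤ (r ^ 2)⁻¹ := by positivity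
  set f : ℕ → ℝ := fun i => g (p ^ k) * g (p ^ (k + i + 1)) / r ^ (i + 1) with hf_def
  have hc : g (p ^ k) = -2 ∨ g (p ^ k) = 2 := by
    rcases hval k hk with h | h | h
    · exact Or.inl h
    · exact absurd h hne
    · exact Or.inr h
  have hcabs : |g (p ^ k)| = 2 := by rcases hc with h | h <;> rw [h] <;> norm_num
  -- summability
  have hbound : ∀ i : ℕ, |f i| ≤ 4 * (r⁻¹) ^ (i + 1) := by
    intro i
    have h1 : |f i| = |g (p ^ k)| * |g (p ^ (k + i + 1))| / r ^ (i + 1) := by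
      rw [hf_def]
      rw [abs_div, abs_mul, abs_pow, abs_of_pos hr0]
    rw [h1, hcabs]
    have h2 : |g (p ^ (k + i + 1))| ≤ 2 := hb (k + i + 1)
    have h3 : (0 : ℝ) < r ^ (i + 1) := pow_pos hr0 _
    rw [inv_pow, ← div_eq_mul_inv, div_le_div_iff₀ h3 h3]
    nlinarith [abs_nonneg (g (p ^ (k + i + 1)))]
  have hgeo : Summable (fun i : ℕ => 4 * (r⁻¹) ^ (i + 1)) := by
    apply Summable.mul_left
    exact (summable_geometric_of_lt_one (by positivity) hrinvlt).comp_injective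
      (add_left_injective 1)
  have hsum : Summable f := by
    apply Summable.of_abs
    exact hgeo.of_nonneg_of_le (fun i => abs_nonneg _) hbound
  have hse : Summable (fun j : ℕ => f (2 * j)) :=
    hsum.comp_injective (mul_right_injective₀ two_ne_zero)
  have hso : Summable (fun j : ℕ => f (2 * j + 1)) :=
    hsum.comp_injective ((add_left_injective 1).comp (mul_right_injective₀ two_ne_zero))
  -- pairing
  have heo : (∑' j : ℕ, f (2 * j)) + ∑' j : ℕ, f (2 * j + 1) = ∑' i : ℕ, f i :=
    tsum_even_add_odd hse hso
  have hpairsum : ∑' j : ℕ, (f (2 * j) + f (2 * j + 1)) = ∑' i : ℕ, f i := by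
    rw [Summable.tsum_add hse hso, heo]
  -- geometric lower bound
  set L : ℕ → ℝ := fun j => (-4 / r) * ((r ^ 2)⁻¹) ^ j with hL_def
  have hLsum : Summable L :=
    (summable_geometric_of_lt_one hxnn hxlt).mul_left _
  have hLle : ∀ j : ℕ, L j ≤ f (2 * j) + f (2 * j + 1) := by
    intro j
    have hLj : L j = -4 / (r ^ (2 * j + 1)) := by
      show -4 / r * ((r ^ 2)⁻¹) ^ j = -4 / r ^ (2 * j + 1)
      rw [inv_pow, ← pow_mul, pow_succ]
      field_simp
    rw [hLj]
    have hf1 : f (2 * j) = g (p ^ k) * g (p ^ (k + 2 * j + 1)) / r ^ (2 * j + 1) := rfl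
    have hf2 : f (2 * j + 1) = g (p ^ k) * g (p ^ (k + 2 * j + 2)) /
        (r ^ (2 * j + 1) * r) := by
      show g (p ^ k) * g (p ^ (k + (2 * j + 1) + 1)) / r ^ (2 * j + 1 + 1) = _
      have h : k + (2 * j + 1) + 1 = k + 2 * j + 2 := by ring
      rw [h, pow_succ r]
    rw [hf1, hf2]
    have halt' : g (p ^ (k + 2 * j + 1)) * g (p ^ (k + 2 * j + 2)) ≤ 0 := by
      have := halt (k + 2 * j + 1)
      simpa [show k + 2 * j + 1 + 1 = k + 2 * j + 2 from rfl] using this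
    exact pair_bound _ _ _ _ _ hc
      (hval (k + 2 * j + 1) (by omega)) (hval (k + 2 * j + 2) (by omega))
      halt' (pow_pos hr0 _) (le_of_lt hr1)
  have hxne : (1 : ℝ) - (r ^ 2)⁻¹ ≠ 0 := by
    have : (0 : ℝ) < 1 - (r ^ 2)⁻¹ := by linarith
    exact ne_of_gt this
  have hLtsum : ∑' j : ℕ, L j = -4 * r / (r ^ 2 - 1) := by
    rw [hL_def, tsum_mul_left, tsum_geometric_of_lt_one hxnn hxlt]
    field_simp
  have hmain : -4 * r / (r ^ 2 - 1) ≤ ∑' i : ℕ, f i := by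
    rw [← hpairsum, ← hLtsum]
    exact Summable.tsum_le_tsum hLle hLsum (hse.add hso)
  have hsq : g (p ^ k) ^ 2 = 4 := by rcases hc with h | h <;> rw [h] <;> norm_num
  constructor
  · rw [hsq]
    have heq : 4 - 8 * r / (r ^ 2 - 1) = 4 + 2 * (-4 * r / (r ^ 2 - 1)) := by ring
    rw [heq]
    have h2 : 2 * (-4 * r / (r ^ 2 - 1)) ≤ 2 * ∑' i : ℕ, f i := by linarith
    linarith
  · have h8 : 8 * r / (r ^ 2 - 1) ≤ 3 := by
      rw [div_le_iff₀ hr2pos]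
      nlinarith
    linarith
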